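/- arXiv:1912.13085 — 5 statements merged into one kernel-verified Lean document; each statement's English description precedes it below -/
import Mathlib

section
/- Let m be a positive natural number, let M and K be m×m real antisymmetric matrices, let S : ℝ^m → ℝ be continuously differentiable, and let z : ℝ × ℝ → ℝ^m (arguments written (x,t)) be twice continuously differentiable and satisfy M ∂_t z + K ∂_x z = ∇S(z) at every point. Define E(x,t) = S(z(x,t)) − (1/2)(K ∂_x z(x,t))·z(x,t) and F(x,t) = (1/2)(K ∂_t z(x,t))·z(x,t). Then ∂_t E + ∂_x F = 0 at every point (x,t). -/
open Matrix

/-- Partial derivative in the first (spatial) variable of a function on `ℝ × ℝ`. -/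
noncomputable def pdX {E : Type*} [NormedAddCommGroup E] [NormedSpace ℝ E]
    (z : ℝ × ℝ → E) (p : ℝ × ℝ) : E :=
  fderiv ℝ z p (1, 0)

/-- Partial derivative in the second (temporal) variable of a function on `ℝ × ℝ`. -/
noncomputable def pdT {E : Type*} [NormedAddCommGroup E] [NormedSpace ℝ E]
    (z : ℝ × ℝ → E) (p : ℝ × ℝ) : E :=
  fderiv ℝ z p (0, 1)

/-- The gradient of `S : ℝ^m → ℝ`, as the vector of partial derivatives. -/
noncomputable def gradS {m : ℕ} (S : (Fin m → ℝ) → ℝ) (v : Fin m → ℝ) : Fin m → ℝ :=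
  fun i => fderiv ℝ S v (Pi.single i 1)

section aux

variable {m : ℕ}

/-- Antisymmetry of a matrix gives antisymmetry of the associated bilinear form. -/
lemma antisym_dot {K : Matrix (Fin m) (Fin m) ℝ} (hK : Kᵀ = -K) (a b : Fin m → ℝ) :
    K.mulVec a ⬝ᵥ b = -(K.mulVec b ⬝ᵥ a) := by
  rw [dotProduct_comm, dotProduct_mulVec, ← Matrix.mulVec_transpose, hK,
    Matrix.neg_mulVec, neg_dotProduct]

lemma antisym_dot_self {K : Matrix (Fin m) (Fin m) ℝ} (hK : Kᵀ = -K) (a : Fin m → ℝ) :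
    K.mulVec a ⬝ᵥ a = 0 := by
  have h := antisym_dot hK a a
  linarith

/-- The directional derivative of a scalar function is the dot product with the gradient. -/
lemma fderiv_eq_gradS_dot {S : (Fin m → ℝ) → ℝ} (v w : Fin m → ℝ) :
    fderiv ℝ S v w = gradS S v ⬝ᵥ w := by
  have hw : (∑ i, w i • (Pi.single i 1 : Fin m → ℝ)) = w := by
    ext j
    simp [Pi.single_apply, Finset.sum_ite_eq']
  conv_lhs => rw [← hw]
  rw [map_sum]
  simp only [_root_.map_smul]
  simp [gradS, dotProduct, smul_eq_mul, mul_comm]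

/-- Derivative of a dot product of two curves. -/
lemma HasDerivAt.dotProduct' {u w : ℝ → Fin m → ℝ} {u' w' : Fin m → ℝ} {t : ℝ}
    (hu : HasDerivAt u u' t) (hw : HasDerivAt w w' t) :
    HasDerivAt (fun s => u s ⬝ᵥ w s) (u' ⬝ᵥ w t + u t ⬝ᵥ w') t := by
  have hcomp : ∀ i : Fin m, HasDerivAt (fun s => u s i * w s i)
      (u' i * w t i + u t i * w' i) t := by
    intro i
    have hui : HasDerivAt (fun s => u s i) (u' i) t :=
      (ContinuousLinearMap.proj (R := ℝ) (φ := fun _ : Fin m => ℝ) i).hasFDerivAt.comp_hasDerivAt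
        t hu
    have hwi : HasDerivAt (fun s => w s i) (w' i) t :=
      (ContinuousLinearMap.proj (R := ℝ) (φ := fun _ : Fin m => ℝ) i).hasFDerivAt.comp_hasDerivAt
        t hw
    exact hui.mul hwi
  have hsum := HasDerivAt.sum (u := Finset.univ) (fun i _ => hcomp i)
  simp only [dotProduct]
  convert hsum using 1
  · rfl
  · rfl
  · funext s
    rw [Finset.sum_apply]
  · exact Finset.sum_add_distrib.symm

/-- Derivative of a curve multiplied by a matrix. -/
lemma HasDerivAt.matMulVec {K : Matrix (Fin m) (Fin m) ℝ} {u : ℝ → Fin m → ℝ}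
    {u' : Fin m → ℝ} {t : ℝ} (hu : HasDerivAt u u' t) :
    HasDerivAt (fun s => K.mulVec (u s)) (K.mulVec u') t := by
  have : HasDerivAt (fun s => (Matrix.mulVecLin K).toContinuousLinearMap (u s))
      ((Matrix.mulVecLin K).toContinuousLinearMap u') t :=
    ((Matrix.mulVecLin K).toContinuousLinearMap).hasFDerivAt.comp_hasDerivAt t hu
  simpa using this

end aux

/-- Local energy conservation law `∂ₜE + ∂ₓF = 0` for the multi-symplectic
Hamiltonian PDE `M zₜ + K zₓ = ∇S(z)`. -/
theorem stmt0 {m : ℕ} (hm : 0 < m)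
    (M K : Matrix (Fin m) (Fin m) ℝ)
    (hM : Mᵀ = -M) (hK : Kᵀ = -K)
    (S : (Fin m → ℝ) → ℝ) (hS : ContDiff ℝ 1 S)
    (z : ℝ × ℝ → Fin m → ℝ) (hz : ContDiff ℝ 2 z)
    (hpde : ∀ p : ℝ × ℝ, M.mulVec (pdT z p) + K.mulVec (pdX z p) = gradS S (z p))
    (E F : ℝ × ℝ → ℝ)
    (hE : ∀ p : ℝ × ℝ, E p = S (z p) - (1/2) * (K.mulVec (pdX z p) ⬝ᵥ z p))
    (hF : ∀ p : ℝ × ℝ, F p = (1/2) * (K.mulVec (pdT z p) ⬝ᵥ z p)) :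
    ∀ x t : ℝ, deriv (fun s => E (x, s)) t + deriv (fun y => F (y, t)) x = 0 := by
  intro x t
  set p : ℝ × ℝ := (x, t) with hp
  -- differentiability facts
  have hzd : Differentiable ℝ z := hz.differentiable (by norm_num)
  have hΦ : ContDiff ℝ 1 (fderiv ℝ z) := hz.fderiv_right (by norm_num)
  have hΦd : Differentiable ℝ (fderiv ℝ z) := hΦ.differentiable one_ne_zero
  -- the straight lines through p
  have hlt : HasDerivAt (fun s : ℝ => (x, s)) ((0 : ℝ), (1 : ℝ)) t :=
    (hasDerivAt_const t x).prodMk (hasDerivAt_id t)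
  have hlx : HasDerivAt (fun y : ℝ => (y, t)) ((1 : ℝ), (0 : ℝ)) x :=
    (hasDerivAt_id x).prodMk (hasDerivAt_const x t)
  -- z along the lines
  have hzt : HasDerivAt (fun s => z (x, s)) (pdT z p) t :=
    (hzd p).hasFDerivAt.comp_hasDerivAt t hlt
  have hzx : HasDerivAt (fun y => z (y, t)) (pdX z p) x :=
    (hzd p).hasFDerivAt.comp_hasDerivAt x hlx
  -- second derivatives
  set z_xt : Fin m → ℝ := fderiv ℝ (fderiv ℝ z) p (0, 1) (1, 0) with hzxt_def
  set z_tx : Fin m → ℝ := fderiv ℝ (fderiv ℝ z) p (1, 0) (0, 1) with hztx_def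
  have hsymm : z_xt = z_tx := (hz.contDiffAt.isSymmSndFDerivAt (by simp)).eq _ _
  -- pdX z along the time line
  have hΦt : HasDerivAt (fun s => fderiv ℝ z (x, s)) (fderiv ℝ (fderiv ℝ z) p (0, 1)) t :=
    (hΦd p).hasFDerivAt.comp_hasDerivAt t hlt
  have hpXt : HasDerivAt (fun s => pdX z (x, s)) z_xt t := by
    have := hΦt.clm_apply (hasDerivAt_const t ((1 : ℝ), (0 : ℝ)))
    simpa [pdX, hzxt_def] using this
  -- pdT z along the space line
  have hΦx : HasDerivAt (fun y => fderiv ℝ z (y, t)) (fderiv ℝ (fderiv ℝ z) p (1, 0)) x :=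
    (hΦd p).hasFDerivAt.comp_hasDerivAt x hlx
  have hpTx : HasDerivAt (fun y => pdT z (y, t)) z_tx x := by
    have := hΦx.clm_apply (hasDerivAt_const x ((0 : ℝ), (1 : ℝ)))
    simpa [pdT, hztx_def] using this
  -- S ∘ z along the time line
  have hSz : HasDerivAt (fun s => S (z (x, s))) (gradS S (z p) ⬝ᵥ pdT z p) t := by
    have := ((hS.differentiable one_ne_zero) (z p)).hasFDerivAt.comp_hasDerivAt t hzt
    rwa [fderiv_eq_gradS_dot] at this
  -- derivative of E along the time line
  have hEder : HasDerivAt (fun s => E (x, s))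
      (gradS S (z p) ⬝ᵥ pdT z p -
        (1/2) * (K.mulVec z_xt ⬝ᵥ z p + K.mulVec (pdX z p) ⬝ᵥ pdT z p)) t := by
    have hdot : HasDerivAt (fun s => K.mulVec (pdX z (x, s)) ⬝ᵥ z (x, s))
        (K.mulVec z_xt ⬝ᵥ z p + K.mulVec (pdX z p) ⬝ᵥ pdT z p) t :=
      (hpXt.matMulVec).dotProduct' hzt
    have hmain := hSz.sub (hdot.const_mul (1/2 : ℝ))
    have hfun : (fun s => E (x, s)) =
        (fun s => S (z (x, s)) - 1/2 * (K.mulVec (pdX z (x, s)) ⬝ᵥ z (x, s))) :=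
      funext fun s => hE (x, s)
    rw [hfun]
    exact hmain
  -- derivative of F along the space line
  have hFder : HasDerivAt (fun y => F (y, t))
      ((1/2) * (K.mulVec z_tx ⬝ᵥ z p + K.mulVec (pdT z p) ⬝ᵥ pdX z p)) x := by
    have hdot : HasDerivAt (fun y => K.mulVec (pdT z (y, t)) ⬝ᵥ z (y, t))
        (K.mulVec z_tx ⬝ᵥ z p + K.mulVec (pdT z p) ⬝ᵥ pdX z p) x :=
      (hpTx.matMulVec).dotProduct' hzx
    have hmain := hdot.const_mul (1/2 : ℝ)
    have hfun : (fun y => F (y, t)) =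
        (fun y => 1/2 * (K.mulVec (pdT z (y, t)) ⬝ᵥ z (y, t))) :=
      funext fun y => hF (y, t)
    rw [hfun]
    exact hmain
  rw [hEder.deriv, hFder.deriv]
  -- now pure algebra
  have h1 : gradS S (z p) ⬝ᵥ pdT z p = K.mulVec (pdX z p) ⬝ᵥ pdT z p := by
    rw [← hpde p, add_dotProduct, antisym_dot_self hM, zero_add]
  have h2 : K.mulVec (pdT z p) ⬝ᵥ pdX z p = -(K.mulVec (pdX z p) ⬝ᵥ pdT z p) :=
    antisym_dot hK _ _
  rw [h1, h2, hsymm]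
  ring
end

section
/- Let m be a positive natural number, let M and K be m×m real antisymmetric matrices, let S : ℝ^m → ℝ be continuously differentiable, and let z : ℝ × ℝ → ℝ^m (arguments written (x,t)) be twice continuously differentiable and satisfy M ∂_t z + K ∂_x z = ∇S(z) at every point. Define I(x,t) = (1/2)(M ∂_x z(x,t))·z(x,t) and G(x,t) = S(z(x,t)) − (1/2)(M ∂_t z(x,t))·z(x,t). Then ∂_t I + ∂_x G = 0 at every point (x,t). -/
open Matrix

section Aux

variable {m : ℕ}

lemma anti_dot {A : Matrix (Fin m) (Fin m) ℝ} (hA : Aᵀ = -A) (a b : Fin m → ℝ) :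
    A.mulVec a ⬝ᵥ b = -(A.mulVec b ⬝ᵥ a) := by
  rw [dotProduct_comm, Matrix.dotProduct_mulVec, ← Matrix.mulVec_transpose, hA,
    Matrix.neg_mulVec, neg_dotProduct]

/-- The bilinear form `(a, b) ↦ (A a) ⬝ᵥ b` as a continuous bilinear map. -/
noncomputable def dotB (A : Matrix (Fin m) (Fin m) ℝ) :
    (Fin m → ℝ) →L[ℝ] (Fin m → ℝ) →L[ℝ] ℝ :=
  LinearMap.toContinuousLinearMap <|
    (LinearMap.toContinuousLinearMap :
        ((Fin m → ℝ) →ₗ[ℝ] ℝ) ≃ₗ[ℝ] ((Fin m → ℝ) →L[ℝ] ℝ)).toLinearMap.comp <|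
      LinearMap.mk₂ ℝ (fun a b => A.mulVec a ⬝ᵥ b)
        (fun a a' b => by simp [Matrix.mulVec_add, add_dotProduct])
        (fun c a b => by simp [Matrix.mulVec_smul, smul_dotProduct])
        (fun a b b' => by simp [dotProduct_add])
        (fun c a b => by simp [dotProduct_smul])

@[simp] lemma dotB_apply (A : Matrix (Fin m) (Fin m) ℝ) (a b : Fin m → ℝ) :
    dotB A a b = A.mulVec a ⬝ᵥ b := by
  simp [dotB]

lemma fderiv_eq_grad (S : (Fin m → ℝ) → ℝ) (w v : Fin m → ℝ) :
    fderiv ℝ S w v = gradS S w ⬝ᵥ v := by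
  classical
  have h := LinearMap.pi_apply_eq_sum_univ ((fderiv ℝ S w).toLinearMap) v
  simp only [ContinuousLinearMap.coe_coe] at h
  rw [h, dotProduct]
  refine Finset.sum_congr rfl fun i _ => ?_
  rw [smul_eq_mul, mul_comm]
  congr 1
  unfold gradS
  congr 1
  ext j
  simp [Pi.single_apply, eq_comm]

end Aux

/-- Local momentum conservation law `∂ₜI + ∂ₓG = 0` for the multi-symplectic
Hamiltonian PDE `M zₜ + K zₓ = ∇S(z)`. -/
theorem stmt1 {m : ℕ} (hm : 0 < m)
    (M K : Matrix (Fin m) (Fin m) ℝ)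
    (hM : Mᵀ = -M) (hK : Kᵀ = -K)
    (S : (Fin m → ℝ) → ℝ) (hS : ContDiff ℝ 1 S)
    (z : ℝ × ℝ → Fin m → ℝ) (hz : ContDiff ℝ 2 z)
    (hpde : ∀ p : ℝ × ℝ, M.mulVec (pdT z p) + K.mulVec (pdX z p) = gradS S (z p))
    (I G : ℝ × ℝ → ℝ)
    (hI : ∀ p : ℝ × ℝ, I p = (1/2) * (M.mulVec (pdX z p) ⬝ᵥ z p))
    (hG : ∀ p : ℝ × ℝ, G p = S (z p) - (1/2) * (M.mulVec (pdT z p) ⬝ᵥ z p)) :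
    ∀ x t : ℝ, deriv (fun s => I (x, s)) t + deriv (fun y => G (y, t)) x = 0 := by
  intro x t
  classical
  set p : ℝ × ℝ := (x, t) with hp
  have hz1 : ContDiff ℝ 1 z := hz.of_le one_le_two
  have hzd : Differentiable ℝ z := hz1.differentiable one_ne_zero
  have hdz : ContDiff ℝ 1 (fderiv ℝ z) :=
    hz.fderiv_right (by norm_num)
  have hdzd : Differentiable ℝ (fderiv ℝ z) := hdz.differentiable one_ne_zero
  set D2 : (ℝ × ℝ) →L[ℝ] (ℝ × ℝ) →L[ℝ] (Fin m → ℝ) := fderiv ℝ (fderiv ℝ z) p with hD2def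
  have hcT : HasDerivAt (fun s : ℝ => ((x, s) : ℝ × ℝ)) (0, 1) t :=
    HasDerivAt.prodMk (hasDerivAt_const t x) (hasDerivAt_id t)
  have hcX : HasDerivAt (fun y : ℝ => ((y, t) : ℝ × ℝ)) (1, 0) x :=
    HasDerivAt.prodMk (hasDerivAt_id x) (hasDerivAt_const x t)
  have hzp : HasFDerivAt z (fderiv ℝ z p) p := (hzd p).hasFDerivAt
  have hD2 : HasFDerivAt (fderiv ℝ z) D2 p := (hdzd p).hasFDerivAt
  have hZx : HasFDerivAt (pdX z)
      ((ContinuousLinearMap.apply ℝ (Fin m → ℝ) ((1:ℝ), (0:ℝ))).comp D2) p :=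
    (ContinuousLinearMap.apply ℝ (Fin m → ℝ) ((1:ℝ), (0:ℝ))).hasFDerivAt.comp p hD2
  have hZt : HasFDerivAt (pdT z)
      ((ContinuousLinearMap.apply ℝ (Fin m → ℝ) ((0:ℝ), (1:ℝ))).comp D2) p :=
    (ContinuousLinearMap.apply ℝ (Fin m → ℝ) ((0:ℝ), (1:ℝ))).hasFDerivAt.comp p hD2
  -- derivative of the I-part along the time direction
  have hg1 : HasFDerivAt (fun q => dotB M (pdX z q) (z q))
      (((dotB M).precompR (ℝ × ℝ) (pdX z p) (fderiv ℝ z p)) +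
        ((dotB M).precompL (ℝ × ℝ)
          ((ContinuousLinearMap.apply ℝ (Fin m → ℝ) ((1:ℝ), (0:ℝ))).comp D2) (z p))) p :=
    (dotB M).hasFDerivAt_of_bilinear hZx hzp
  have hIt : HasDerivAt (fun s => I (x, s))
      ((1/2) * (M.mulVec (pdX z p) ⬝ᵥ (fderiv ℝ z p (0, 1)) +
        M.mulVec (D2 (0, 1) (1, 0)) ⬝ᵥ z p)) t := by
    have h1 := (hg1.comp_hasDerivAt t hcT).const_mul (1/2)
    have heq : (fun s => I (x, s)) = fun s => (1/2) * dotB M (pdX z (x, s)) (z (x, s)) := by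
      funext s; rw [hI, dotB_apply]
    rw [heq]
    convert h1 using 1
    all_goals rfl
  -- derivative of the G-part along the space direction
  have hSz : HasFDerivAt S (fderiv ℝ S (z p)) (z p) :=
    ((hS.differentiable one_ne_zero) (z p)).hasFDerivAt
  have hzx1 : HasDerivAt (fun y => z (y, t)) (fderiv ℝ z p (1, 0)) x :=
    hzp.comp_hasDerivAt x hcX
  have hSx : HasDerivAt (fun y => S (z (y, t))) (fderiv ℝ S (z p) (fderiv ℝ z p (1, 0))) x :=
    hSz.comp_hasDerivAt x hzx1
  have hg2 : HasFDerivAt (fun q => dotB M (pdT z q) (z q))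
      (((dotB M).precompR (ℝ × ℝ) (pdT z p) (fderiv ℝ z p)) +
        ((dotB M).precompL (ℝ × ℝ)
          ((ContinuousLinearMap.apply ℝ (Fin m → ℝ) ((0:ℝ), (1:ℝ))).comp D2) (z p))) p :=
    (dotB M).hasFDerivAt_of_bilinear hZt hzp
  have hGx : HasDerivAt (fun y => G (y, t))
      (fderiv ℝ S (z p) (fderiv ℝ z p (1, 0)) -
        (1/2) * (M.mulVec (pdT z p) ⬝ᵥ (fderiv ℝ z p (1, 0)) +
          M.mulVec (D2 (1, 0) (0, 1)) ⬝ᵥ z p)) x := by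
    have h2 := (hg2.comp_hasDerivAt x hcX).const_mul (1/2)
    have heq : (fun y => G (y, t)) =
        fun y => S (z (y, t)) - (1/2) * dotB M (pdT z (y, t)) (z (y, t)) := by
      funext y; rw [hG, dotB_apply]
    rw [heq]
    convert hSx.sub h2 using 1
    all_goals rfl
  rw [hIt.deriv, hGx.deriv]
  -- now pure algebra
  have hsym : D2 (0, 1) (1, 0) = D2 (1, 0) (0, 1) :=
    (hz.contDiffAt.isSymmSndFDerivAt (by norm_num)) _ _
  have hgrad : fderiv ℝ S (z p) (fderiv ℝ z p (1, 0)) =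
      M.mulVec (pdT z p) ⬝ᵥ (fderiv ℝ z p (1, 0)) +
        K.mulVec (pdX z p) ⬝ᵥ (fderiv ℝ z p (1, 0)) := by
    rw [fderiv_eq_grad, ← hpde p, add_dotProduct]
  have hzero : K.mulVec (pdX z p) ⬝ᵥ (fderiv ℝ z p (1, 0)) = 0 := by
    have h := anti_dot hK (fderiv ℝ z p (1, 0)) (fderiv ℝ z p (1, 0))
    have h' : pdX z p = fderiv ℝ z p (1, 0) := rfl
    rw [h']
    linarith
  have hanti : M.mulVec (pdX z p) ⬝ᵥ (fderiv ℝ z p (0, 1)) =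
      -(M.mulVec (pdT z p) ⬝ᵥ (fderiv ℝ z p (1, 0))) := by
    exact anti_dot hM (pdX z p) (fderiv ℝ z p (0, 1))
  rw [hgrad, hzero, hsym, hanti]
  ring
end

section
/- Let m be a positive natural number, let M and K be m×m real antisymmetric matrices, let S : ℝ^m → ℝ be twice continuously differentiable, and let z : ℝ × ℝ → ℝ^m be continuous. Suppose w, w̌ : ℝ × ℝ → ℝ^m are continuously differentiable and each satisfies the variational (linearized) equation M ∂_t w + K ∂_x w = ∇²S(z(x,t)) w at every point, where ∇²S denotes the Hessian matrix of S. Then ∂_t((M w)·w̌) + ∂_x((K w)·w̌) = 0 at every point (x,t). -/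
open Matrix

/-- The Hessian matrix of `S : ℝ^m → ℝ`, as the matrix of second partial derivatives. -/
noncomputable def hessS {m : ℕ} (S : (Fin m → ℝ) → ℝ) (v : Fin m → ℝ) :
    Matrix (Fin m) (Fin m) ℝ :=
  fun i j => fderiv ℝ (fun u => fderiv ℝ S u (Pi.single j 1)) v (Pi.single i 1)

/-- The Hessian of a `C²` function is a symmetric matrix (Clairaut/Schwarz). -/
lemma hessS_symm {m : ℕ} {S : (Fin m → ℝ) → ℝ} (hS : ContDiff ℝ 2 S) (v : Fin m → ℝ) :
    (hessS S v)ᵀ = hessS S v := by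
  have hdiff : DifferentiableAt ℝ (fderiv ℝ S) v := by
    have : ContDiff ℝ 1 (fderiv ℝ S) := (hS.fderiv_right (le_refl _))
    exact this.differentiable one_ne_zero v
  have key : ∀ e e' : Fin m → ℝ,
      fderiv ℝ (fun u => fderiv ℝ S u e) v e' = fderiv ℝ (fderiv ℝ S) v e' e := by
    intro e e'
    have h1 : HasFDerivAt (fderiv ℝ S) (fderiv ℝ (fderiv ℝ S) v) v := hdiff.hasFDerivAt
    have h2 : HasFDerivAt (fun u => fderiv ℝ S u e)
        ((ContinuousLinearMap.apply ℝ ℝ e).comp (fderiv ℝ (fderiv ℝ S) v)) v :=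
      (ContinuousLinearMap.apply ℝ ℝ e).hasFDerivAt.comp v h1
    rw [h2.fderiv]; rfl
  have hsymm : IsSymmSndFDerivAt ℝ S v :=
    hS.contDiffAt.isSymmSndFDerivAt (by norm_num)
  ext i j
  simp only [transpose_apply, hessS]
  rw [key, key, hsymm]

/-- Product rule for `s ↦ (A (f s)) ⬝ᵥ g s`. -/
lemma hasDerivAt_mulVec_dot {m : ℕ} (A : Matrix (Fin m) (Fin m) ℝ)
    {f g : ℝ → Fin m → ℝ} {f' g' : Fin m → ℝ} {t : ℝ}
    (hf : HasDerivAt f f' t) (hg : HasDerivAt g g' t) :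
    HasDerivAt (fun s => A.mulVec (f s) ⬝ᵥ g s)
      (A.mulVec f' ⬝ᵥ g t + A.mulVec (f t) ⬝ᵥ g') t := by
  have hfi : ∀ i, HasDerivAt (fun s => f s i) (f' i) t := fun i =>
    (ContinuousLinearMap.proj (R := ℝ) (φ := fun _ : Fin m => ℝ) i).hasFDerivAt.comp_hasDerivAt t hf
  have hgi : ∀ i, HasDerivAt (fun s => g s i) (g' i) t := fun i =>
    (ContinuousLinearMap.proj (R := ℝ) (φ := fun _ : Fin m => ℝ) i).hasFDerivAt.comp_hasDerivAt t hg
  have hAfi : ∀ i, HasDerivAt (fun s => A.mulVec (f s) i) (A.mulVec f' i) t := by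
    intro i
    simp only [Matrix.mulVec, dotProduct]
    exact HasDerivAt.fun_sum (fun j _ => (hfi j).const_mul (A i j))
  have h : HasDerivAt (fun s => ∑ i, A.mulVec (f s) i * g s i)
      (∑ i, (A.mulVec f' i * g t i + A.mulVec (f t) i * g' i)) t :=
    HasDerivAt.fun_sum (fun i _ => (hAfi i).mul (hgi i))
  simpa [dotProduct, Finset.sum_add_distrib] using h

/-- For an antisymmetric matrix, `(Au)·v = -(u·(Av))`. -/
lemma antisymm_dot {m : ℕ} {A : Matrix (Fin m) (Fin m) ℝ} (hA : Aᵀ = -A)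
    (u v : Fin m → ℝ) : A.mulVec u ⬝ᵥ v = -(u ⬝ᵥ A.mulVec v) := by
  have : A.mulVec u ⬝ᵥ v = u ⬝ᵥ Aᵀ.mulVec v := by
    rw [← Matrix.vecMul_transpose, Matrix.dotProduct_mulVec]
  rw [this, hA]
  simp [Matrix.neg_mulVec]

/-- Multi-symplectic conservation law `∂ₜ((Mw)·w̌) + ∂ₓ((Kw)·w̌) = 0` for two solutions
`w`, `w̌` of the variational (linearized) equation `M wₜ + K wₓ = ∇²S(z) w`. -/
theorem stmt2 {m : ℕ} (hm : 0 < m)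
    (M K : Matrix (Fin m) (Fin m) ℝ)
    (hM : Mᵀ = -M) (hK : Kᵀ = -K)
    (S : (Fin m → ℝ) → ℝ) (hS : ContDiff ℝ 2 S)
    (z : ℝ × ℝ → Fin m → ℝ) (hz : Continuous z)
    (w wv : ℝ × ℝ → Fin m → ℝ)
    (hw : ContDiff ℝ 1 w) (hwv : ContDiff ℝ 1 wv)
    (hweq : ∀ p : ℝ × ℝ,
      M.mulVec (pdT w p) + K.mulVec (pdX w p) = (hessS S (z p)).mulVec (w p))
    (hwveq : ∀ p : ℝ × ℝ,
      M.mulVec (pdT wv p) + K.mulVec (pdX wv p) = (hessS S (z p)).mulVec (wv p)) :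
    ∀ x t : ℝ,
      deriv (fun s => M.mulVec (w (x, s)) ⬝ᵥ wv (x, s)) t
        + deriv (fun y => K.mulVec (w (y, t)) ⬝ᵥ wv (y, t)) x = 0 := by
  intro x t
  set p : ℝ × ℝ := (x, t)
  have hwd : HasFDerivAt w (fderiv ℝ w p) p :=
    (hw.differentiable one_ne_zero p).hasFDerivAt
  have hwvd : HasFDerivAt wv (fderiv ℝ wv p) p :=
    (hwv.differentiable one_ne_zero p).hasFDerivAt
  have hcurveT : HasDerivAt (fun s : ℝ => ((x, s) : ℝ × ℝ)) (0, 1) t :=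
    HasDerivAt.prodMk (hasDerivAt_const t x) (hasDerivAt_id t)
  have hcurveX : HasDerivAt (fun y : ℝ => ((y, t) : ℝ × ℝ)) (1, 0) x :=
    HasDerivAt.prodMk (hasDerivAt_id x) (hasDerivAt_const x t)
  have hwT : HasDerivAt (fun s => w (x, s)) (pdT w p) t :=
    hwd.comp_hasDerivAt t hcurveT
  have hwvT : HasDerivAt (fun s => wv (x, s)) (pdT wv p) t :=
    hwvd.comp_hasDerivAt t hcurveT
  have hwX : HasDerivAt (fun y => w (y, t)) (pdX w p) x :=
    hwd.comp_hasDerivAt x hcurveX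
  have hwvX : HasDerivAt (fun y => wv (y, t)) (pdX wv p) x :=
    hwvd.comp_hasDerivAt x hcurveX
  have d1 := (hasDerivAt_mulVec_dot M hwT hwvT).deriv
  have d2 := (hasDerivAt_mulVec_dot K hwX hwvX).deriv
  rw [d1, d2]
  have e1 : M.mulVec (w p) ⬝ᵥ pdT wv p = -(w p ⬝ᵥ M.mulVec (pdT wv p)) :=
    antisymm_dot hM _ _
  have e2 : K.mulVec (w p) ⬝ᵥ pdX wv p = -(w p ⬝ᵥ K.mulVec (pdX wv p)) :=
    antisymm_dot hK _ _
  have hHsymm := hessS_symm hS (z p)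
  have e3 : (hessS S (z p)).mulVec (w p) ⬝ᵥ wv p = w p ⬝ᵥ (hessS S (z p)).mulVec (wv p) := by
    rw [← Matrix.vecMul_transpose, Matrix.dotProduct_mulVec, hHsymm]
  have lhs : (M.mulVec (pdT w p) ⬝ᵥ wv p + M.mulVec (w p) ⬝ᵥ pdT wv p)
      + (K.mulVec (pdX w p) ⬝ᵥ wv p + K.mulVec (w p) ⬝ᵥ pdX wv p)
      = (M.mulVec (pdT w p) + K.mulVec (pdX w p)) ⬝ᵥ wv p
        - w p ⬝ᵥ (M.mulVec (pdT wv p) + K.mulVec (pdX wv p)) := by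
    rw [e1, e2, add_dotProduct, dotProduct_add]
    ring
  rw [lhs, hweq p, hwveq p, e3]
  ring
end

section
/- Let m be a positive natural number, let K and B be m×m real antisymmetric matrices and A an m×m real symmetric matrix. Let z⁻, z⁺, ž⁻, ž⁺ : ℝ → ℝ^m be differentiable functions of t; write [z] = z⁺ − z⁻, {z} = (z⁺ + z⁻)/2 (and similarly for ž); define the numerical fluxes K̂z(t) = K{z}(t) + A[z](t) + B ([z])'(t) and K̂ž(t) = K{ž}(t) + A[ž](t) + B ([ž])'(t), and set 𝓕(t) = ((K z⁺)·ž⁺ + (K z⁻)·ž⁻)/2 − K̂z·{ž} + K̂ž·{z}. Then for every t ∈ ℝ: (i) (K z⁻)·ž⁻ − K̂z·ž⁻ + K̂ž·z⁻ = 𝓕 − (1/2) d/dt[(B[ž])·[z]]; and (ii) (K z⁺)·ž⁺ − K̂z·ž⁺ + K̂ž·z⁺ = 𝓕 + (1/2) d/dt[(B[ž])·[z]]. -/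
open Matrix

/-- The numerical flux `K̂z = K{z} + A[z] + B d/dt [z]` built from the two traces
`z⁻ = zm`, `z⁺ = zp` (functions of time) at a cell interface. -/
noncomputable def hatFlux {m : ℕ} (K A B : Matrix (Fin m) (Fin m) ℝ)
    (zm zp : ℝ → Fin m → ℝ) (t : ℝ) : Fin m → ℝ :=
  K.mulVec ((1/2 : ℝ) • (zp t + zm t)) + A.mulVec (zp t - zm t)
    + B.mulVec (deriv (fun s => zp s - zm s) t)

/-- `𝓕 = {(Kz)·ž} − K̂z·{ž} + K̂ž·{z}` at a cell interface. -/
noncomputable def calF {m : ℕ} (K A B : Matrix (Fin m) (Fin m) ℝ)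
    (zm zp wm wp : ℝ → Fin m → ℝ) (t : ℝ) : ℝ :=
  ((K.mulVec (zp t) ⬝ᵥ wp t) + (K.mulVec (zm t) ⬝ᵥ wm t)) / 2
    - hatFlux K A B zm zp t ⬝ᵥ ((1/2 : ℝ) • (wp t + wm t))
    + hatFlux K A B wm wp t ⬝ᵥ ((1/2 : ℝ) • (zp t + zm t))


lemma skew_dot {m : ℕ} {M : Matrix (Fin m) (Fin m) ℝ} (h : Mᵀ = -M) (x y : Fin m → ℝ) :
    M.mulVec x ⬝ᵥ y = -(M.mulVec y ⬝ᵥ x) := by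
  rw [dotProduct_comm, Matrix.dotProduct_mulVec, ← Matrix.mulVec_transpose, h,
    Matrix.neg_mulVec, neg_dotProduct]

lemma symm_dot {m : ℕ} {M : Matrix (Fin m) (Fin m) ℝ} (h : Mᵀ = M) (x y : Fin m → ℝ) :
    M.mulVec x ⬝ᵥ y = M.mulVec y ⬝ᵥ x := by
  rw [dotProduct_comm, Matrix.dotProduct_mulVec, ← Matrix.mulVec_transpose, h]

lemma hasDerivAt_mulVec_dot_s5 {m : ℕ} (M : Matrix (Fin m) (Fin m) ℝ)
    {u v : ℝ → Fin m → ℝ} {u' v' : Fin m → ℝ} {t : ℝ}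
    (hu : HasDerivAt u u' t) (hv : HasDerivAt v v' t) :
    HasDerivAt (fun s => M.mulVec (u s) ⬝ᵥ v s)
      (M.mulVec u' ⬝ᵥ v t + M.mulVec (u t) ⬝ᵥ v') t := by
  simp only [Matrix.mulVec, dotProduct]
  rw [← Finset.sum_add_distrib]
  exact HasDerivAt.fun_sum fun i _ =>
    ((HasDerivAt.fun_sum fun j _ => ((hasDerivAt_pi.1 hu j).const_mul (M i j))).mul
      (hasDerivAt_pi.1 hv i))

/-- Lemma 3.1 of the paper: the two interface identities for the numerical flux
`K̂z = K{z} + A[z] + B d/dt[z]`, with `K`, `B` antisymmetric and `A` symmetric. -/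
theorem stmt5 {m : ℕ} (hm : 0 < m)
    (K A B : Matrix (Fin m) (Fin m) ℝ)
    (hK : Kᵀ = -K) (hB : Bᵀ = -B) (hA : Aᵀ = A)
    (zm zp wm wp : ℝ → Fin m → ℝ)
    (hzm : Differentiable ℝ zm) (hzp : Differentiable ℝ zp)
    (hwm : Differentiable ℝ wm) (hwp : Differentiable ℝ wp) :
    ∀ t : ℝ,
      (K.mulVec (zm t) ⬝ᵥ wm t - hatFlux K A B zm zp t ⬝ᵥ wm t
          + hatFlux K A B wm wp t ⬝ᵥ zm t
        = calF K A B zm zp wm wp t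
          - (1/2) * deriv (fun s => B.mulVec (wp s - wm s) ⬝ᵥ (zp s - zm s)) t)
      ∧
      (K.mulVec (zp t) ⬝ᵥ wp t - hatFlux K A B zm zp t ⬝ᵥ wp t
          + hatFlux K A B wm wp t ⬝ᵥ zp t
        = calF K A B zm zp wm wp t
          + (1/2) * deriv (fun s => B.mulVec (wp s - wm s) ⬝ᵥ (zp s - zm s)) t) := by
  intro t
  have hz : HasDerivAt (fun s => zp s - zm s) (deriv (fun s => zp s - zm s) t) t :=
    ((hzp.sub hzm) t).hasDerivAt
  have hw : HasDerivAt (fun s => wp s - wm s) (deriv (fun s => wp s - wm s) t) t :=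
    ((hwp.sub hwm) t).hasDerivAt
  have hD : deriv (fun s => B.mulVec (wp s - wm s) ⬝ᵥ (zp s - zm s)) t
      = B.mulVec (deriv (fun s => wp s - wm s) t) ⬝ᵥ (zp t - zm t)
        + B.mulVec (wp t - wm t) ⬝ᵥ (deriv (fun s => zp s - zm s) t) := by
    have := (hasDerivAt_mulVec_dot_s5 B hw hz).deriv
    simpa using this
  set a := zm t with ha
  set b := zp t with hb
  set c := wm t with hc
  set d := wp t with hd
  set dz := deriv (fun s => zp s - zm s) t with hdz
  set dw := deriv (fun s => wp s - wm s) t with hdw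
  rw [hD]
  constructor <;>
  · simp only [hatFlux, calF, ← ha, ← hb, ← hc, ← hd, ← hdz, ← hdw,
      Matrix.mulVec_add, Matrix.mulVec_sub, Matrix.mulVec_smul,
      add_dotProduct, sub_dotProduct, smul_dotProduct,
      dotProduct_add, dotProduct_sub, dotProduct_smul,
      smul_eq_mul]
    linarith [skew_dot hK a c, skew_dot hK a d, skew_dot hK b c, skew_dot hK b d,
      symm_dot hA a c, symm_dot hA a d, symm_dot hA b c, symm_dot hA b d,
      skew_dot hB dz c, skew_dot hB dz d, skew_dot hB dw a, skew_dot hB dw b,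
      skew_dot hB dz a, skew_dot hB dz b, skew_dot hB dw c, skew_dot hB dw d]
end

section
/- Let m be a positive natural number and K an m×m real antisymmetric matrix. Then there exist an m×m real orthogonal matrix Q and a ⌊m/2⌋×⌊m/2⌋ real matrix Λ such that K = Qᵀ J Q, where J is the block matrix [[0, −Λᵀ],[Λ, 0]] (with blocks of size m/2) if m is even, and J is the block matrix [[0, 0, −Λᵀ],[0, 0, 0],[Λ, 0, 0]] (with outer blocks of size ⌊m/2⌋ and middle block of size 1) if m is odd. -/
open Module
open scoped RealInnerProductSpace

universe u

lemma key : ∀ (n : ℕ) (E : Type u) [NormedAddCommGroup E] [InnerProductSpace ℝ E]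
    [FiniteDimensional ℝ E], finrank ℝ E = n → ∀ (T : E →ₗ[ℝ] E),
    (∀ x y : E, ⟪T x, y⟫ = -⟪x, T y⟫) →
    ∃ b : OrthonormalBasis (Fin n) ℝ E,
      (∀ i j : Fin n, (i : ℕ) < n - n/2 → (j : ℕ) < n - n/2 → ⟪T (b i), b j⟫ = 0) ∧
      (∀ i j : Fin n, n/2 ≤ (i : ℕ) → n/2 ≤ (j : ℕ) → ⟪T (b i), b j⟫ = 0) := by
  intro n
  induction n using Nat.strong_induction_on with
  | _ n IH =>
    intro E _ _ _ hn T hT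
    have hS : (T ∘ₗ T).IsSymmetric := by
      intro x y
      simp only [LinearMap.comp_apply]
      rw [hT (T x) y, hT x (T y), neg_neg]
    set b0 := hS.eigenvectorBasis hn with hb0
    set μ := hS.eigenvalues hn with hμ
    by_cases hzero : ∀ i, μ i = 0
    · -- T = 0 case
      have hS0 : ∀ x : E, T (T x) = 0 := by
        have h0 : (T ∘ₗ T) = 0 := by
          apply b0.toBasis.ext
          intro i
          have := hS.apply_eigenvectorBasis hn i
          have hz : hS.eigenvalues hn i = 0 := hzero i
          simp only [LinearMap.comp_apply, hz, RCLike.ofReal_zero, zero_smul] at this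
          simp only [OrthonormalBasis.coe_toBasis, LinearMap.comp_apply, LinearMap.zero_apply]
          exact this
        intro x
        simpa using LinearMap.congr_fun h0 x
      have hT0 : ∀ x : E, T x = 0 := by
        intro x
        have h1 : ⟪T x, T x⟫ = 0 := by
          rw [hT x (T x), hS0 x, inner_zero_right, neg_zero]
        exact inner_self_eq_zero.mp h1
      exact ⟨b0, fun i j _ _ => by simp [hT0], fun i j _ _ => by simp [hT0]⟩
    · push_neg at hzero
      obtain ⟨i0, hi0⟩ := hzero
      set w : E := b0 i0 with hwdef
      have hw1 : ‖w‖ = 1 := b0.orthonormal.1 i0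
      have hwne : w ≠ 0 := by intro h; rw [h] at hw1; simp at hw1
      have hSw : T (T w) = μ i0 • w := by
        have := hS.apply_eigenvectorBasis hn i0
        simpa [← hμ, ← hb0] using this
      have hTwne : T w ≠ 0 := by
        intro h
        rw [h, map_zero] at hSw
        rcases smul_eq_zero.mp hSw.symm with h' | h'
        · exact hi0 h'
        · exact hwne h'
      set c : ℝ := ‖T w‖ with hc
      have hcpos : 0 < c := norm_pos_iff.mpr hTwne
      set v : E := c⁻¹ • T w with hvdef
      have hv1 : ‖v‖ = 1 := by
        rw [hvdef, norm_smul]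
        simp only [norm_inv, Real.norm_eq_abs, abs_of_pos hcpos, ← hc]
        field_simp
      have hwTw : ⟪w, T w⟫ = 0 := by
        have h1 := hT w w
        have h2 : ⟪T w, w⟫ = ⟪w, T w⟫ := real_inner_comm _ _
        linarith
      have hwv : ⟪w, v⟫ = 0 := by rw [hvdef, real_inner_smul_right, hwTw, mul_zero]
      have hvw : ⟪v, w⟫ = 0 := by rw [real_inner_comm]; exact hwv
      have hTweq : T w = c • v := by
        rw [hvdef, smul_smul, mul_inv_cancel₀ (ne_of_gt hcpos), one_smul]
      have hTv : T v = (μ i0 / c) • w := by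
        rw [hvdef, map_smul, hSw, smul_smul, div_eq_inv_mul]
      clear_value w c v
      clear hwdef hc hvdef hSw hwTw
      set U : Submodule ℝ E := Submodule.span ℝ {w, v} with hU
      have hwU : w ∈ U := Submodule.subset_span (by simp)
      have hvU : v ∈ U := Submodule.subset_span (by simp)
      set W : Submodule ℝ E := Uᗮ with hW
      have hWw : ∀ x ∈ W, ⟪w, x⟫ = 0 := fun x hx => hx w hwU
      have hWv : ∀ x ∈ W, ⟪v, x⟫ = 0 := fun x hx => hx v hvU
      have hWw' : ∀ x ∈ W, ⟪x, w⟫ = 0 := fun x hx => by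
        rw [real_inner_comm]; exact hWw x hx
      have hWv' : ∀ x ∈ W, ⟪x, v⟫ = 0 := fun x hx => by
        rw [real_inner_comm]; exact hWv x hx
      have h_inv : ∀ x ∈ W, T x ∈ W := by
        intro x hx
        rw [hW, Submodule.mem_orthogonal]
        intro u hu
        induction hu using Submodule.span_induction with
        | mem y hy =>
          rcases hy with h | h
          · rw [h, real_inner_comm, hT x w, hTweq, real_inner_smul_right, hWv' x hx,
              mul_zero, neg_zero]
          · simp only [Set.mem_singleton_iff] at h
            rw [h, real_inner_comm, hT x v, hTv, real_inner_smul_right, hWw' x hx,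
              mul_zero, neg_zero]
        | zero => simp
        | add y z _ _ hy hz => rw [inner_add_left, hy, hz, add_zero]
        | smul a y _ hy => rw [inner_smul_left, hy, mul_zero]
      have hww : ⟪w, w⟫ = (1 : ℝ) := by
        rw [real_inner_self_eq_norm_mul_norm, hw1, one_mul]
      have hvv : ⟪v, v⟫ = (1 : ℝ) := by
        rw [real_inner_self_eq_norm_mul_norm, hv1, one_mul]
      have hon2 : Orthonormal ℝ ![w, v] := by
        rw [orthonormal_iff_ite]
        intro i j
        fin_cases i <;> fin_cases j <;> simp [hww, hvv, hwv, hvw, hw1, hv1]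
      have hrange : Set.range ![w, v] = {w, v} := by
        ext x; simp [Fin.exists_fin_two, or_comm]
      have hUr : finrank ℝ U = 2 := by
        rw [hU, ← hrange, finrank_span_eq_card hon2.linearIndependent]
        simp
      have hdim : finrank ℝ U + finrank ℝ W = n := by
        rw [← hn, hW]; exact U.finrank_add_finrank_orthogonal
      have hn2 : 2 ≤ n := by omega
      have hWr : finrank ℝ W = n - 2 := by omega
      set T' : W →ₗ[ℝ] W := T.restrict h_inv with hT'def
      have hT'coe : ∀ x : W, (T' x : E) = T (x : E) := fun x => rfl
      have hT'skew : ∀ x y : W, ⟪T' x, y⟫ = -⟪x, T' y⟫ := by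
        intro x y
        show ⟪(T' x : E), (y : E)⟫ = -⟪(x : E), (T' y : E)⟫
        rw [hT'coe, hT'coe]; exact hT _ _
      obtain ⟨b', hb1, hb2⟩ := IH (n - 2) (by omega) W hWr T' hT'skew
      have hmemW : ∀ k : Fin (n - 2), (b' k : E) ∈ W := fun k => (b' k).2
      set f : Fin n → E := fun i =>
        if h : (i : ℕ) = 0 then w
        else if h' : (i : ℕ) = n - 1 then v
        else (b' ⟨(i : ℕ) - 1, by have := i.isLt; omega⟩ : E) with hfdef
      have hfval0 : ∀ i : Fin n, (i : ℕ) = 0 → f i = w := by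
        intro i hi; rw [hfdef]; exact dif_pos hi
      have hfval1 : ∀ i : Fin n, (i : ℕ) ≠ 0 → (i : ℕ) = n - 1 → f i = v := by
        intro i hi hi'; rw [hfdef]; simp only; rw [dif_neg hi, dif_pos hi']
      have hfval2 : ∀ (i : Fin n) (hi : (i : ℕ) ≠ 0) (hi' : (i : ℕ) ≠ n - 1),
          f i = (b' ⟨(i : ℕ) - 1, by have := i.isLt; omega⟩ : E) := by
        intro i hi hi'; rw [hfdef]; simp only; rw [dif_neg hi, dif_neg hi']
      have hinner : ∀ i j : Fin n, ⟪f i, f j⟫ = if i = j then (1 : ℝ) else 0 := by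
        intro i j
        rcases eq_or_ne (i : ℕ) 0 with hi | hi <;> rcases eq_or_ne (j : ℕ) 0 with hj | hj
        · have hij : i = j := Fin.ext (by omega)
          rw [hfval0 i hi, hfval0 j hj, if_pos hij, hww]
        · have hij : i ≠ j := fun h => hj (h ▸ hi)
          rw [hfval0 i hi, if_neg hij]
          rcases eq_or_ne (j : ℕ) (n - 1) with hj' | hj'
          · rw [hfval1 j hj hj']; exact hwv
          · rw [hfval2 j hj hj']; exact hWw _ (hmemW _)
        · have hij : i ≠ j := fun h => hi (h ▸ hj)
          rw [hfval0 j hj, if_neg hij]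
          rcases eq_or_ne (i : ℕ) (n - 1) with hi' | hi'
          · rw [hfval1 i hi hi']; exact hvw
          · rw [hfval2 i hi hi']; exact hWw' _ (hmemW _)
        · rcases eq_or_ne (i : ℕ) (n - 1) with hi' | hi' <;>
            rcases eq_or_ne (j : ℕ) (n - 1) with hj' | hj'
          · have hij : i = j := Fin.ext (by omega)
            rw [hfval1 i hi hi', hfval1 j hj hj', if_pos hij, hvv]
          · have hij : i ≠ j := fun h => hj' (h ▸ hi')
            rw [hfval1 i hi hi', hfval2 j hj hj', if_neg hij]
            exact hWv _ (hmemW _)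
          · have hij : i ≠ j := fun h => hi' (h ▸ hj')
            rw [hfval1 j hj hj', hfval2 i hi hi', if_neg hij]
            exact hWv' _ (hmemW _)
          · rw [hfval2 i hi hi', hfval2 j hj hj']
            have hcoe : ∀ k l : Fin (n - 2),
                ⟪(b' k : E), (b' l : E)⟫ = ⟪b' k, b' l⟫ := fun k l => rfl
            rw [hcoe, orthonormal_iff_ite.mp b'.orthonormal]
            have hiff : (⟨(i : ℕ) - 1, by have := i.isLt; omega⟩ : Fin (n - 2)) =
                ⟨(j : ℕ) - 1, by have := j.isLt; omega⟩ ↔ i = j := by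
              constructor
              · intro h
                have := congrArg Fin.val h
                simp only at this
                exact Fin.ext (by omega)
              · intro h; subst h; rfl
            split_ifs with h1 h2 h2
            · rfl
            · exact absurd (hiff.mp h1) h2
            · exact absurd (hiff.mpr h2) h1
            · rfl
      have hf : Orthonormal ℝ f := orthonormal_iff_ite.mpr hinner
      have hspan : ⊤ ≤ Submodule.span ℝ (Set.range f) := by
        rw [hf.linearIndependent.span_eq_top_of_card_eq_finrank' (by simp [hn])]
      set b : OrthonormalBasis (Fin n) ℝ E := OrthonormalBasis.mk hf hspan with hbdef
      have hbf : ∀ i, b i = f i := fun i => by rw [hbdef, OrthonormalBasis.coe_mk]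
      have hmidT : ∀ k : Fin (n - 2), T (b' k : E) ∈ W := fun k => h_inv _ (hmemW k)
      have hmid_eq : ∀ k l : Fin (n - 2),
          ⟪T (b' k : E), (b' l : E)⟫ = ⟪T' (b' k), b' l⟫ := fun k l => by
        rw [← hT'coe]; rfl
      have hTwx : ∀ x : E, ⟪T w, x⟫ = c * ⟪v, x⟫ := fun x => by
        rw [hTweq, real_inner_smul_left]
      have hTvx : ∀ x : E, ⟪T v, x⟫ = (μ i0 / c) * ⟪w, x⟫ := fun x => by
        rw [hTv, real_inner_smul_left]
      refine ⟨b, ?_, ?_⟩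
      · intro i j hilt hjlt
        rw [hbf, hbf]
        have hine : (i : ℕ) ≠ n - 1 := by omega
        have hjne : (j : ℕ) ≠ n - 1 := by omega
        rcases eq_or_ne (i : ℕ) 0 with hi | hi <;> rcases eq_or_ne (j : ℕ) 0 with hj | hj
        · rw [hfval0 i hi, hfval0 j hj, hTwx, hvw, mul_zero]
        · rw [hfval0 i hi, hfval2 j hj hjne, hTwx, hWv _ (hmemW _), mul_zero]
        · rw [hfval0 j hj, hfval2 i hi hine]
          exact hWw' _ (hmidT _)
        · rw [hfval2 i hi hine, hfval2 j hj hjne, hmid_eq]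
          refine hb1 _ _ ?_ ?_ <;> · simp only; omega
      · intro i j hige hjge
        rw [hbf, hbf]
        have hine : (i : ℕ) ≠ 0 := by omega
        have hjne : (j : ℕ) ≠ 0 := by omega
        rcases eq_or_ne (i : ℕ) (n - 1) with hi | hi <;>
          rcases eq_or_ne (j : ℕ) (n - 1) with hj | hj
        · rw [hfval1 i hine hi, hfval1 j hjne hj, hTvx, hwv, mul_zero]
        · rw [hfval1 i hine hi, hfval2 j hjne hj, hTvx, hWw _ (hmemW _), mul_zero]
        · rw [hfval1 j hjne hj, hfval2 i hine hi]
          exact hWv' _ (hmidT _)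
        · rw [hfval2 i hine hi, hfval2 j hjne hj, hmid_eq]
          refine hb2 _ _ ?_ ?_ <;> · simp only; omega

open Matrix

/-- The block matrix `J = [[0, −Λᵀ],[Λ, 0]]` (for `m` even) or
`[[0, 0, −Λᵀ],[0, 0, 0],[Λ, 0, 0]]` with middle block of size 1 (for `m` odd),
where the outer blocks have size `⌊m/2⌋`. -/
def Jmat (m : ℕ) (Λ : Matrix (Fin (m/2)) (Fin (m/2)) ℝ) : Matrix (Fin m) (Fin m) ℝ :=
  fun i j =>
    if h : (i : ℕ) < m/2 ∧ m - m/2 ≤ (j : ℕ) then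
      -Λ ⟨(j : ℕ) - (m - m/2), by have := j.isLt; omega⟩ ⟨(i : ℕ), h.1⟩
    else if h' : m - m/2 ≤ (i : ℕ) ∧ (j : ℕ) < m/2 then
      Λ ⟨(i : ℕ) - (m - m/2), by have := i.isLt; omega⟩ ⟨(j : ℕ), h'.2⟩
    else 0

/-- Every real antisymmetric matrix `K` can be written as `K = Qᵀ J Q` with `Q`
orthogonal and `J` of the block form above for some `⌊m/2⌋ × ⌊m/2⌋` real matrix `Λ`. -/
theorem stmt10 {m : ℕ} (hm : 0 < m)
    (K : Matrix (Fin m) (Fin m) ℝ) (hK : Kᵀ = -K) :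
    ∃ (Q : Matrix (Fin m) (Fin m) ℝ) (Λ : Matrix (Fin (m/2)) (Fin (m/2)) ℝ),
      Qᵀ * Q = 1 ∧ K = Qᵀ * Jmat m Λ * Q := by
  classical
  have hdots : ∀ x y : EuclideanSpace ℝ (Fin m), ⟪x, y⟫ = ∑ k, x k * y k := by
    intro x y
    simp [PiLp.inner_apply, RCLike.inner_apply, conj_trivial]
    exact Finset.sum_congr rfl fun k _ => mul_comm _ _
  set T : EuclideanSpace ℝ (Fin m) →ₗ[ℝ] EuclideanSpace ℝ (Fin m) :=
    { toFun := fun x => WithLp.toLp 2 (K.mulVec x)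
      map_add' := fun x y => by simp [Matrix.mulVec_add]
      map_smul' := fun a x => by simp [Matrix.mulVec_smul] } with hTdef
  have hTapp : ∀ x : EuclideanSpace ℝ (Fin m), T x = K.mulVec x := fun _ => rfl
  have hskew : ∀ x y : EuclideanSpace ℝ (Fin m), ⟪T x, y⟫ = -⟪x, T y⟫ := by
    intro x y
    rw [hdots, hdots, hTapp, hTapp]
    have h1 : ∑ k, (K.mulVec x) k * y k = (K.mulVec x) ⬝ᵥ y := rfl
    have h2 : ∑ k, x k * (K.mulVec y) k = x ⬝ᵥ (K.mulVec y) := rfl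
    rw [h1, h2, dotProduct_comm, dotProduct_mulVec, ← mulVec_transpose, hK,
      neg_mulVec, neg_dotProduct, dotProduct_comm]
  obtain ⟨b, hb1, hb2⟩ := key m (EuclideanSpace ℝ (Fin m)) finrank_euclideanSpace_fin T hskew
  set Q : Matrix (Fin m) (Fin m) ℝ := Matrix.of (fun i j => b i j) with hQdef
  have hQapp : ∀ i j, Q i j = b i j := fun i j => rfl
  have hQQt : Q * Qᵀ = 1 := by
    ext i j
    rw [Matrix.mul_apply, Matrix.one_apply]
    have : ∑ k, Q i k * Qᵀ k j = ⟪b i, b j⟫ := by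
      rw [hdots]
      exact Finset.sum_congr rfl fun k _ => rfl
    rw [this, orthonormal_iff_ite.mp b.orthonormal]
  have hQtQ : Qᵀ * Q = 1 := mul_eq_one_comm.mp hQQt
  set M : Matrix (Fin m) (Fin m) ℝ := Q * K * Qᵀ with hMdef
  have hM : ∀ i j, M i j = ⟪T (b j), b i⟫ := by
    intro i j
    rw [hdots, hTapp]
    simp only [hMdef, Matrix.mul_apply, Matrix.transpose_apply, Matrix.mulVec,
      dotProduct, Finset.sum_mul, Finset.mul_sum, hQapp]
    rw [Finset.sum_comm]
    refine Finset.sum_congr rfl fun k _ => Finset.sum_congr rfl fun l _ => by ring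
  have hMskew : ∀ i j, M j i = -M i j := by
    intro i j
    rw [hM, hM, hskew, real_inner_comm]
  have hM1 : ∀ i j : Fin m, (i : ℕ) < m - m/2 → (j : ℕ) < m - m/2 → M i j = 0 := by
    intro i j hi hj
    rw [hM]
    exact hb1 j i hj hi
  have hM2 : ∀ i j : Fin m, m/2 ≤ (i : ℕ) → m/2 ≤ (j : ℕ) → M i j = 0 := by
    intro i j hi hj
    rw [hM]
    exact hb2 j i hj hi
  set Λ : Matrix (Fin (m/2)) (Fin (m/2)) ℝ := fun p q =>
    M ⟨m - m/2 + (p : ℕ), by have := p.isLt; omega⟩ ⟨(q : ℕ), by have := q.isLt; omega⟩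
    with hΛdef
  have hJ : M = Jmat m Λ := by
    ext i j
    simp only [Jmat]
    split_ifs with h h'
    · have hΛeq : Λ ⟨(j : ℕ) - (m - m/2), by have := j.isLt; omega⟩ ⟨(i : ℕ), h.1⟩ = M j i := by
        show M _ _ = M j i
        congr 1 <;> exact Fin.ext (by simp; omega)
      rw [hΛeq, hMskew i j, neg_neg]
    · have hΛeq : Λ ⟨(i : ℕ) - (m - m/2), by have := i.isLt; omega⟩ ⟨(j : ℕ), h'.2⟩ = M i j := by
        show M _ _ = M i j
        congr 1 <;> exact Fin.ext (by simp; omega)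
      rw [hΛeq]
    · push_neg at h h'
      rcases lt_or_ge (i : ℕ) (m - m/2) with hc | hc
      · rcases lt_or_ge (j : ℕ) (m - m/2) with hc2 | hc2
        · exact hM1 i j hc hc2
        · exact hM2 i j (by omega) (by omega)
      · exact hM2 i j (by omega) (by omega)
  refine ⟨Q, Λ, hQtQ, ?_⟩
  rw [← hJ, hMdef]
  rw [show Qᵀ * (Q * K * Qᵀ) * Q = Qᵀ * Q * K * (Qᵀ * Q) by
    simp only [Matrix.mul_assoc]]
  rw [hQtQ, Matrix.mul_one, Matrix.one_mul]
end
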